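/- Let Y_i = θ_i + Z_i/√τ_i with Z_i i.i.d. mean-zero, variance ν₀, and assume: (i) limsup (1/p)Σ 1/τ_i² < ∞; (ii) limsup (1/p)Σ θ_i²/τ_i < ∞; (iii) limsup (1/p)Σ |θ_i|^{2+ε} < ∞ for some ε>0; (iv) P(|Z| > t) ≤ D t^{−α} with α > 4. Then there exists ε' > 0 such that limsup_{p→∞} p^{−(1−ε')} E(max_{1≤i≤p} Y_i²) < ∞. -/

import Mathlib

open MeasureTheory ProbabilityTheory Filter Set ENNReal

lemma aemeasurable_finset_sup' {Ω : Type*} [MeasurableSpace Ω] {μ : Measure Ω}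
    {ι : Type*} {s : Finset ι} (hs : s.Nonempty) {f : ι → Ω → ℝ}
    (hf : ∀ i, AEMeasurable (f i) μ) :
    AEMeasurable (fun ω => s.sup' hs fun i => f i ω) μ := by
  induction hs using Finset.Nonempty.cons_induction with
  | singleton i => simp only [Finset.sup'_singleton]; exact hf i
  | cons i s hi hs ih =>
      simp only [Finset.sup'_cons hs]
      exact (hf i).sup ih

lemma sup_sq_lintegral_le {Ω : Type*} [MeasurableSpace Ω] (μ : Measure Ω)
    [IsProbabilityMeasure μ] (Z : ℕ → Ω → ℝ) (hZ : ∀ i, AEMeasurable (Z i) μ)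
    (D α : ℝ) (hD : 0 < D) (hα : 2 < α)
    (htail : ∀ i : ℕ, ∀ t > (0:ℝ), μ {ω | t < (Z i ω) ^ 2} ≤ ENNReal.ofReal (D * t ^ (-(α/2))))
    {p : ℕ} (hp : 1 ≤ p) :
    ∫⁻ ω, ENNReal.ofReal (⨆ i : Fin p, (Z i ω) ^ 2) ∂μ ≤
      ENNReal.ofReal ((1 + 1/(α/2 - 1)) * (D * p) ^ ((2:ℝ)/α)) := by
  haveI : Nonempty (Fin p) := ⟨⟨0, hp⟩⟩
  have hppos : (0:ℝ) < p := by exact_mod_cast hp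
  have hpD : 0 < D * (p:ℝ) := by positivity
  set t₀ : ℝ := (D * p) ^ ((2:ℝ)/α) with ht₀def
  have ht₀ : 0 < t₀ := Real.rpow_pos_of_pos hpD _
  have hbdd : ∀ ω, BddAbove (Set.range fun i : Fin p => (Z i ω)^2) :=
    fun ω => (Set.finite_range _).bddAbove
  have hnn : ∀ ω, 0 ≤ ⨆ i : Fin p, (Z i ω)^2 :=
    fun ω => le_ciSup_of_le (hbdd ω) ⟨0, hp⟩ (sq_nonneg _)
  have hg : AEMeasurable (fun ω => ⨆ i : Fin p, (Z i ω)^2) μ := by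
    have h2 : (fun ω => ⨆ i : Fin p, (Z i ω)^2)
        = fun ω => Finset.univ.sup' Finset.univ_nonempty fun i : Fin p => (Z i ω)^2 := by
      funext ω; exact (Finset.sup'_univ_eq_ciSup _).symm
    rw [h2]
    exact aemeasurable_finset_sup' _ fun i => (hZ i).pow_const 2
  rw [lintegral_eq_lintegral_meas_lt μ (Filter.Eventually.of_forall hnn) hg]
  have hsplit : (Ioi (0:ℝ)) = Ioc 0 t₀ ∪ Ioi t₀ := (Ioc_union_Ioi_eq_Ioi ht₀.le).symm
  rw [hsplit, lintegral_union measurableSet_Ioi (Ioc_disjoint_Ioi le_rfl)]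
  have part1 : ∫⁻ t in Ioc (0:ℝ) t₀, μ {ω | t < ⨆ i : Fin p, (Z i ω)^2}
      ≤ ENNReal.ofReal t₀ := by
    calc (∫⁻ t in Ioc (0:ℝ) t₀, μ {ω | t < ⨆ i : Fin p, (Z i ω)^2})
        ≤ (∫⁻ _ in Ioc (0:ℝ) t₀, (1:ℝ≥0∞)) := lintegral_mono fun t => prob_le_one
      _ = volume (Ioc (0:ℝ) t₀) := setLIntegral_one _
      _ = ENNReal.ofReal t₀ := by rw [Real.volume_Ioc, sub_zero]
  have hexp : -(α/2) < -1 := by linarith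
  have part2 : ∫⁻ t in Ioi t₀, μ {ω | t < ⨆ i : Fin p, (Z i ω)^2}
      ≤ ENNReal.ofReal (t₀ * (1/(α/2-1))) := by
    have hpt : ∀ t ∈ Ioi t₀, μ {ω | t < ⨆ i : Fin p, (Z i ω)^2}
        ≤ ENNReal.ofReal ((D * p) * t ^ (-(α/2))) := by
      intro t ht
      have htpos : 0 < t := ht₀.trans ht
      have hsub : {ω | t < ⨆ i : Fin p, (Z i ω)^2}
          ⊆ ⋃ i ∈ Finset.range p, {ω | t < (Z i ω)^2} := by
        intro ω hω
        obtain ⟨i, hi⟩ := (lt_ciSup_iff (hbdd ω)).mp hω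
        exact Set.mem_biUnion (Finset.mem_range.mpr i.isLt) hi
      calc μ {ω | t < ⨆ i : Fin p, (Z i ω)^2}
          ≤ μ (⋃ i ∈ Finset.range p, {ω | t < (Z i ω)^2}) := measure_mono hsub
        _ ≤ ∑ i ∈ Finset.range p, μ {ω | t < (Z i ω)^2} := measure_biUnion_finset_le _ _
        _ ≤ ∑ _i ∈ Finset.range p, ENNReal.ofReal (D * t ^ (-(α/2))) :=
            Finset.sum_le_sum fun i _ => htail i t htpos
        _ = ENNReal.ofReal ((D * p) * t ^ (-(α/2))) := by
            rw [Finset.sum_const, Finset.card_range, nsmul_eq_mul,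
              ← ENNReal.ofReal_natCast p, ← ENNReal.ofReal_mul (Nat.cast_nonneg p)]
            congr 1; ring
    have hint : IntegrableOn (fun t : ℝ => (D * p) * t ^ (-(α/2))) (Ioi t₀) :=
      (integrableOn_Ioi_rpow_of_lt hexp ht₀).const_mul _
    have hnn2 : 0 ≤ᵐ[volume.restrict (Ioi t₀)] fun t : ℝ => (D * p) * t ^ (-(α/2)) := by
      filter_upwards [ae_restrict_mem measurableSet_Ioi] with t ht
      have : (0:ℝ) < t := ht₀.trans ht
      positivity
    calc (∫⁻ t in Ioi t₀, μ {ω | t < ⨆ i : Fin p, (Z i ω)^2})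
        ≤ (∫⁻ t in Ioi t₀, ENNReal.ofReal ((D * p) * t ^ (-(α/2)))) :=
          setLIntegral_mono (by fun_prop) hpt
      _ = ENNReal.ofReal (∫ t in Ioi t₀, (D * p) * t ^ (-(α/2))) :=
          (ofReal_integral_eq_lintegral_ofReal hint hnn2).symm
      _ = ENNReal.ofReal (t₀ * (1/(α/2-1))) := by
          rw [MeasureTheory.integral_const_mul, integral_Ioi_rpow_of_lt hexp ht₀]
          congr 1
          have hα0 : α ≠ 0 := by positivity
          have hne1 : -(α/2) + 1 ≠ 0 := by intro h; rw [add_eq_zero_iff_eq_neg] at h; nlinarith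
          have hne2 : α/2 - 1 ≠ 0 := by intro h; nlinarith
          have hkey : (D * ↑p) * t₀ ^ (-(α/2) + 1) = t₀ := by
            rw [ht₀def, ← Real.rpow_mul hpD.le]
            nth_rewrite 1 [← Real.rpow_one (D * ↑p)]
            rw [← Real.rpow_add hpD]
            congr 1
            field_simp
            ring
          have h3 : (D * ↑p) * (-t₀ ^ (-(α/2) + 1) / (-(α/2) + 1))
              = ((D * ↑p) * t₀ ^ (-(α/2) + 1)) * (1/(α/2-1)) := by
            rw [show -(α/2) + 1 = -(α/2 - 1) by ring, neg_div_neg_eq]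
            ring
          rw [h3, hkey]
  calc _ ≤ ENNReal.ofReal t₀ + ENNReal.ofReal (t₀ * (1/(α/2-1))) := add_le_add part1 part2
    _ = ENNReal.ofReal ((1 + 1/(α/2 - 1)) * (D * p) ^ ((2:ℝ)/α)) := by
        rw [← ENNReal.ofReal_add ht₀.le
          (mul_nonneg ht₀.le (le_of_lt (by rw [one_div]; exact inv_pos.mpr (by linarith))))]
        congr 1; rw [ht₀def]; ring

set_option maxHeartbeats 1000000 in
theorem stmt11 {Ω : Type*} [MeasurableSpace Ω] (μ : Measure Ω) [IsProbabilityMeasure μ]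
    (Z : ℕ → Ω → ℝ) (θ τ : ℕ → ℝ) (ν0 D α : ℝ)
    (hτ : ∀ i, 0 < τ i)
    (hind : iIndepFun Z μ)
    (hid : ∀ i, IdentDistrib (Z i) (Z 0) μ μ)
    (hmean0 : ∫ ω, Z 0 ω ∂μ = 0) (hvarZ : variance (Z 0) μ = ν0)
    (hi : IsBoundedUnder (· ≤ ·) atTop
      (fun p : ℕ => (1 / (p:ℝ)) * ∑ i ∈ Finset.range p, 1 / τ i ^ 2))
    (hii : IsBoundedUnder (· ≤ ·) atTop
      (fun p : ℕ => (1 / (p:ℝ)) * ∑ i ∈ Finset.range p, θ i ^ 2 / τ i))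
    (hiii : ∃ ε > (0:ℝ), IsBoundedUnder (· ≤ ·) atTop
      (fun p : ℕ => (1 / (p:ℝ)) * ∑ i ∈ Finset.range p, |θ i| ^ (2 + ε)))
    (hD : 0 < D) (hα : 4 < α)
    (htail : ∀ t > (0:ℝ), (μ {ω | t < |Z 0 ω|}).toReal ≤ D * t ^ (-α)) :
    ∃ ε' > (0:ℝ), IsBoundedUnder (· ≤ ·) atTop
      (fun p : ℕ => (p:ℝ) ^ (-(1 - ε')) *
        ∫ ω, ⨆ i : Fin p, (θ i + Z i ω / Real.sqrt (τ i)) ^ 2 ∂μ) := by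
  obtain ⟨ε, hε, C3, hC3⟩ := hiii
  obtain ⟨C1, hC1⟩ := hi
  rw [eventually_map] at hC1 hC3
  have hZae : ∀ i, AEMeasurable (Z i) μ := fun i => (hid i).aemeasurable_fst
  -- transformed tail bound
  have htail2 : ∀ i : ℕ, ∀ t > (0:ℝ), μ {ω | t < (Z i ω) ^ 2}
      ≤ ENNReal.ofReal (D * t ^ (-(α/2))) := by
    intro i t ht
    have hms : MeasurableSet {x : ℝ | t < x ^ 2} :=
      measurableSet_lt measurable_const (measurable_id.pow_const 2)
    have h0 : μ {ω | t < (Z i ω) ^ 2} = μ {ω | t < (Z 0 ω) ^ 2} := (hid i).measure_mem_eq hms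
    rw [h0]
    have hset2 : {ω | t < (Z 0 ω) ^ 2} = {ω | Real.sqrt t < |Z 0 ω|} := by
      ext ω
      simp only [Set.mem_setOf_eq]
      constructor
      · intro h
        have h2 : Real.sqrt t < Real.sqrt ((Z 0 ω) ^ 2) := Real.sqrt_lt_sqrt ht.le h
        rwa [Real.sqrt_sq_eq_abs] at h2
      · intro h
        have h2 : (Real.sqrt t) ^ 2 < |Z 0 ω| ^ 2 :=
          pow_lt_pow_left₀ h (Real.sqrt_nonneg t) two_ne_zero
        rwa [Real.sq_sqrt ht.le, sq_abs] at h2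
    rw [hset2]
    have h3 := htail (Real.sqrt t) (Real.sqrt_pos.mpr ht)
    calc μ {ω | Real.sqrt t < |Z 0 ω|}
        = ENNReal.ofReal ((μ {ω | Real.sqrt t < |Z 0 ω|}).toReal) :=
          (ENNReal.ofReal_toReal (measure_ne_top μ _)).symm
      _ ≤ ENNReal.ofReal (D * (Real.sqrt t) ^ (-α)) := ENNReal.ofReal_le_ofReal h3
      _ = ENNReal.ofReal (D * t ^ (-(α/2))) := by
          congr 1
          rw [Real.sqrt_eq_rpow, ← Real.rpow_mul ht.le,
            show (1:ℝ)/2 * -α = -(α/2) by ring]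
  -- constants
  set C1' : ℝ := max C1 1 with hC1'def
  set C3' : ℝ := max C3 1 with hC3'def
  have hC1'pos : (0:ℝ) < C1' := lt_of_lt_of_le one_pos (le_max_right _ _)
  have hC3'pos : (0:ℝ) < C3' := lt_of_lt_of_le one_pos (le_max_right _ _)
  set a : ℝ := 2 / (2 + ε) with hadef
  set b : ℝ := 1/2 + 2/α with hbdef
  have h2ε : (0:ℝ) < 2 + ε := by linarith
  have ha0 : 0 < a := by positivity
  have ha1 : a < 1 := by rw [hadef, div_lt_one h2ε]; linarith
  have hb1 : b < 1 := by
    have : 2/α < 1/2 := by rw [div_lt_div_iff₀ (by linarith) two_pos]; linarith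
    rw [hbdef]; linarith
  have hb0 : 0 < b := by positivity
  set K : ℝ := 1 + 1/(α/2 - 1) with hKdef
  have hK : 0 < K := by
    have h9 : 0 < 1/(α/2-1) := by rw [one_div]; exact inv_pos.mpr (by linarith)
    rw [hKdef]; linarith
  refine ⟨min (1 - a) (1 - b), lt_min (by linarith) (by linarith), ?_⟩
  set ε' : ℝ := min (1 - a) (1 - b) with hε'def
  have haε : a ≤ 1 - ε' := by
    have h9 := min_le_left (1 - a) (1 - b); rw [← hε'def] at h9; linarith
  have hbε : b ≤ 1 - ε' := by
    have h9 := min_le_right (1 - a) (1 - b); rw [← hε'def] at h9; linarith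
  set C : ℝ := 2 * C3' ^ a + 2 * C1' ^ ((1:ℝ)/2) * (K * D ^ ((2:ℝ)/α)) with hCdef
  refine ⟨C, eventually_map.mpr ?_⟩
  filter_upwards [hC1, hC3, eventually_ge_atTop 1] with p hp1 hp3 hp
  haveI : Nonempty (Fin p) := ⟨⟨0, hp⟩⟩
  have hppos : (0:ℝ) < p := by exact_mod_cast hp
  have hp1R : (1:ℝ) ≤ p := by exact_mod_cast hp
  -- sums bounds
  have hS1 : ∑ i ∈ Finset.range p, 1 / τ i ^ 2 ≤ C1' * p := by
    have h2 := mul_le_mul_of_nonneg_left hp1 hppos.le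
    rw [← mul_assoc, mul_one_div_cancel hppos.ne', one_mul] at h2
    have h9 : C1 ≤ C1' := by rw [hC1'def]; exact le_max_left _ _
    nlinarith
  have hS3 : ∑ i ∈ Finset.range p, |θ i| ^ (2 + ε) ≤ C3' * p := by
    have h2 := mul_le_mul_of_nonneg_left hp3 hppos.le
    rw [← mul_assoc, mul_one_div_cancel hppos.ne', one_mul] at h2
    have h9 : C3 ≤ C3' := by rw [hC3'def]; exact le_max_left _ _
    nlinarith
  set A : ℝ := (C3' * p) ^ a with hAdef
  set T : ℝ := (C1' * p) ^ ((1:ℝ)/2) with hTdef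
  have hA0 : 0 ≤ A := Real.rpow_nonneg (by positivity) _
  have hT0 : 0 ≤ T := Real.rpow_nonneg (by positivity) _
  -- coordinatewise bounds
  have hθ : ∀ i < p, (θ i) ^ 2 ≤ A := by
    intro i hip
    have h1 : |θ i| ^ (2 + ε) ≤ C3' * p :=
      le_trans (Finset.single_le_sum (f := fun j => |θ j| ^ (2 + ε))
        (fun j _ => Real.rpow_nonneg (abs_nonneg _) _) (Finset.mem_range.mpr hip)) hS3
    have h2 := Real.rpow_le_rpow (Real.rpow_nonneg (abs_nonneg _) _) h1 ha0.le
    rw [← Real.rpow_mul (abs_nonneg _), show (2 + ε) * a = 2 by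
      rw [hadef]; field_simp] at h2
    rwa [show |θ i| ^ (2:ℝ) = θ i ^ 2 by
      rw [show (2:ℝ) = ((2:ℕ):ℝ) by norm_num, Real.rpow_natCast, sq_abs]] at h2
  have hτb : ∀ i < p, 1 / τ i ≤ T := by
    intro i hip
    have h1 : (1 / τ i) ^ (2:ℕ) ≤ C1' * p := by
      rw [div_pow, one_pow]
      exact le_trans (Finset.single_le_sum (f := fun j => 1 / τ j ^ 2)
        (fun j _ => by positivity) (Finset.mem_range.mpr hip)) hS1
    have h0i : (0:ℝ) ≤ 1 / τ i := (one_div_pos.mpr (hτ i)).le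
    have h2 := Real.rpow_le_rpow (sq_nonneg (1 / τ i)) h1 (by norm_num : (0:ℝ) ≤ 1/2)
    rwa [← Real.rpow_natCast (1 / τ i) 2, ← Real.rpow_mul h0i,
      show ((2:ℕ):ℝ) * (1/2) = 1 by norm_num, Real.rpow_one] at h2
  -- pointwise bound on the sup
  have hbddZ : ∀ ω, BddAbove (Set.range fun i : Fin p => (Z i ω) ^ 2) :=
    fun ω => (Set.finite_range _).bddAbove
  have hptw : ∀ ω, (⨆ i : Fin p, (θ i + Z i ω / Real.sqrt (τ i)) ^ 2)
      ≤ 2 * A + 2 * T * (⨆ i : Fin p, (Z i ω) ^ 2) := by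
    intro ω
    apply ciSup_le
    intro i
    have hsq : (θ i + Z i ω / Real.sqrt (τ i)) ^ 2
        ≤ 2 * (θ i) ^ 2 + 2 * (Z i ω / Real.sqrt (τ i)) ^ 2 := by
      nlinarith [sq_nonneg (θ (i:ℕ) - Z i ω / Real.sqrt (τ i))]
    have h2 : (Z i ω / Real.sqrt (τ i)) ^ 2 = (1 / τ i) * (Z i ω) ^ 2 := by
      rw [div_pow, Real.sq_sqrt (hτ i).le]; ring
    have h3 : (1 / τ i) * (Z i ω) ^ 2 ≤ T * (Z i ω) ^ 2 :=
      mul_le_mul_of_nonneg_right (hτb i i.isLt) (sq_nonneg _)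
    have h4 : (Z i ω) ^ 2 ≤ ⨆ j : Fin p, (Z j ω) ^ 2 := le_ciSup (hbddZ ω) i
    have h5 : T * (Z i ω) ^ 2 ≤ T * (⨆ j : Fin p, (Z j ω) ^ 2) :=
      mul_le_mul_of_nonneg_left h4 hT0
    have h6 := hθ i i.isLt
    calc (θ i + Z i ω / Real.sqrt (τ i)) ^ 2
        ≤ 2 * (θ i) ^ 2 + 2 * ((1 / τ i) * (Z i ω) ^ 2) := by rw [← h2]; exact hsq
      _ ≤ 2 * A + 2 * (T * (⨆ j : Fin p, (Z j ω) ^ 2)) := by linarith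
      _ = 2 * A + 2 * T * (⨆ j : Fin p, (Z j ω) ^ 2) := by ring
  have hnnY : ∀ ω, 0 ≤ ⨆ i : Fin p, (θ i + Z i ω / Real.sqrt (τ i)) ^ 2 :=
    fun ω => le_ciSup_of_le ((Set.finite_range _).bddAbove) ⟨0, hp⟩ (sq_nonneg _)
  -- integral vs lintegral
  have hIle : ∫ ω, (⨆ i : Fin p, (θ i + Z i ω / Real.sqrt (τ i)) ^ 2) ∂μ
      ≤ (∫⁻ ω, ENNReal.ofReal (⨆ i : Fin p, (θ i + Z i ω / Real.sqrt (τ i)) ^ 2) ∂μ).toReal := by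
    by_cases hint : Integrable (fun ω => ⨆ i : Fin p, (θ i + Z i ω / Real.sqrt (τ i)) ^ 2) μ
    · rw [integral_eq_lintegral_of_nonneg_ae (Filter.Eventually.of_forall hnnY)
        hint.aestronglyMeasurable]
    · rw [integral_undef hint]; exact ENNReal.toReal_nonneg
  -- lintegral bound
  have hlin : ∫⁻ ω, ENNReal.ofReal (⨆ i : Fin p, (θ i + Z i ω / Real.sqrt (τ i)) ^ 2) ∂μ
      ≤ ENNReal.ofReal (2 * A) + ENNReal.ofReal (2 * T) *
        ∫⁻ ω, ENNReal.ofReal (⨆ i : Fin p, (Z i ω) ^ 2) ∂μ := by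
    have step : ∀ ω, ENNReal.ofReal (⨆ i : Fin p, (θ i + Z i ω / Real.sqrt (τ i)) ^ 2)
        ≤ ENNReal.ofReal (2 * A) + ENNReal.ofReal (2 * T) *
          ENNReal.ofReal (⨆ i : Fin p, (Z i ω) ^ 2) := by
      intro ω
      calc ENNReal.ofReal (⨆ i : Fin p, (θ i + Z i ω / Real.sqrt (τ i)) ^ 2)
          ≤ ENNReal.ofReal (2 * A + 2 * T * (⨆ i : Fin p, (Z i ω) ^ 2)) :=
            ENNReal.ofReal_le_ofReal (hptw ω)
        _ ≤ ENNReal.ofReal (2 * A) + ENNReal.ofReal (2 * T * (⨆ i : Fin p, (Z i ω) ^ 2)) :=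
            ENNReal.ofReal_add_le
        _ = ENNReal.ofReal (2 * A) + ENNReal.ofReal (2 * T) *
            ENNReal.ofReal (⨆ i : Fin p, (Z i ω) ^ 2) := by
            congr 1
            exact ENNReal.ofReal_mul (mul_nonneg two_pos.le hT0)
    calc ∫⁻ ω, ENNReal.ofReal (⨆ i : Fin p, (θ i + Z i ω / Real.sqrt (τ i)) ^ 2) ∂μ
        ≤ ∫⁻ ω, (ENNReal.ofReal (2 * A) + ENNReal.ofReal (2 * T) *
            ENNReal.ofReal (⨆ i : Fin p, (Z i ω) ^ 2)) ∂μ := lintegral_mono step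
      _ = ENNReal.ofReal (2 * A) + ENNReal.ofReal (2 * T) *
            ∫⁻ ω, ENNReal.ofReal (⨆ i : Fin p, (Z i ω) ^ 2) ∂μ := by
          rw [lintegral_add_left measurable_const, lintegral_const_mul' _ _ ENNReal.ofReal_ne_top,
            lintegral_const, measure_univ, mul_one]
  have hZbound := sup_sq_lintegral_le μ Z hZae D α hD (by linarith) htail2 hp
  -- real bound
  set G : ℝ := K * (D * p) ^ ((2:ℝ)/α) with hGdef
  have hG0 : 0 ≤ G := by positivity
  have hRbound : ∫ ω, (⨆ i : Fin p, (θ i + Z i ω / Real.sqrt (τ i)) ^ 2) ∂μ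
      ≤ 2 * A + 2 * T * G := by
    have h1 : ∫⁻ ω, ENNReal.ofReal (⨆ i : Fin p, (θ i + Z i ω / Real.sqrt (τ i)) ^ 2) ∂μ
        ≤ ENNReal.ofReal (2 * A) + ENNReal.ofReal (2 * T) * ENNReal.ofReal G :=
      le_trans hlin (by gcongr)
    have h2 : ENNReal.ofReal (2 * A) + ENNReal.ofReal (2 * T) * ENNReal.ofReal G
        = ENNReal.ofReal (2 * A + 2 * T * G) := by
      rw [← ENNReal.ofReal_mul (by positivity), ← ENNReal.ofReal_add (by positivity) (by positivity)]
    rw [h2] at h1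
    calc ∫ ω, (⨆ i : Fin p, (θ i + Z i ω / Real.sqrt (τ i)) ^ 2) ∂μ
        ≤ (∫⁻ ω, ENNReal.ofReal (⨆ i : Fin p, (θ i + Z i ω / Real.sqrt (τ i)) ^ 2) ∂μ).toReal :=
          hIle
      _ ≤ (ENNReal.ofReal (2 * A + 2 * T * G)).toReal :=
          ENNReal.toReal_mono ENNReal.ofReal_ne_top h1
      _ = 2 * A + 2 * T * G := ENNReal.toReal_ofReal (by positivity)
  -- final arithmetic
  have hfinal : 2 * A + 2 * T * G ≤ C * (p:ℝ) ^ (1 - ε') := by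
    have hA : A ≤ C3' ^ a * (p:ℝ) ^ (1 - ε') := by
      rw [hAdef, Real.mul_rpow hC3'pos.le hppos.le]
      exact mul_le_mul_of_nonneg_left
        (Real.rpow_le_rpow_of_exponent_le hp1R haε) (Real.rpow_nonneg hC3'pos.le _)
    have hTG : T * G ≤ C1' ^ ((1:ℝ)/2) * (K * D ^ ((2:ℝ)/α)) * (p:ℝ) ^ (1 - ε') := by
      rw [hTdef, hGdef, Real.mul_rpow hC1'pos.le hppos.le, Real.mul_rpow hD.le hppos.le]
      have heq : C1' ^ ((1:ℝ)/2) * (p:ℝ) ^ ((1:ℝ)/2) * (K * (D ^ ((2:ℝ)/α) * (p:ℝ) ^ ((2:ℝ)/α)))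
          = C1' ^ ((1:ℝ)/2) * (K * D ^ ((2:ℝ)/α)) * (p:ℝ) ^ b := by
        rw [hbdef, show (1:ℝ)/2 + 2/α = 1/2 + 2/α from rfl, Real.rpow_add hppos]
        ring
      rw [heq]
      exact mul_le_mul_of_nonneg_left
        (Real.rpow_le_rpow_of_exponent_le hp1R hbε) (by positivity)
    rw [hCdef]
    nlinarith [Real.rpow_nonneg hppos.le (1 - ε')]
  have hrpow : (p:ℝ) ^ (-(1 - ε')) * ((p:ℝ) ^ (1 - ε')) = 1 := by
    rw [← Real.rpow_add hppos]; simp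
  calc (p:ℝ) ^ (-(1 - ε')) * ∫ ω, ⨆ i : Fin p, (θ i + Z i ω / Real.sqrt (τ i)) ^ 2 ∂μ
      ≤ (p:ℝ) ^ (-(1 - ε')) * (C * (p:ℝ) ^ (1 - ε')) := by
        exact mul_le_mul_of_nonneg_left (le_trans hRbound hfinal) (Real.rpow_nonneg hppos.le _)
    _ = C := by rw [mul_comm C, ← mul_assoc, hrpow, one_mul]
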